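/- Let p be an odd prime with p ≡ 1 (mod 4). Then the quadratic Gauss sum G(1;p) = ∑_{b=0}^{p-1} e^{2πi b²/p} equals √p. -/

import Mathlib

open Complex

open Filter Topology in
lemma GS.tendsto_theta_one {z : ℂ} (hz : z.im = 0) {f : ℝ → ℂ} (hf : Tendsto (fun t => (f t).im) (𝓝[>] (0:ℝ)) atTop) :
    Tendsto (fun t => jacobiTheta₂ z (f t)) (𝓝[>] (0:ℝ)) (𝓝 1) := by
  have hbs : Summable (fun n : ℤ => Real.exp (-Real.pi * n ^ 2)) := by
    have h1 : Summable (fun n : ℤ => jacobiTheta₂_term n z I) :=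
      (summable_jacobiTheta₂_term_iff _ _).mpr (by simp)
    have := summable_norm_iff.mpr h1
    refine this.congr fun n => ?_
    rw [norm_jacobiTheta₂_term, hz]
    norm_num
  have key : Tendsto (fun t => ∑' n : ℤ, jacobiTheta₂_term n z (f t)) (𝓝[>] (0:ℝ))
      (𝓝 (∑' n : ℤ, if n = 0 then (1:ℂ) else 0)) := by
    apply tendsto_tsum_of_dominated_convergence hbs
    · intro n
      by_cases hn : n = 0
      · subst hn
        simp only [if_true]
        have : ∀ t, jacobiTheta₂_term 0 z (f t) = 1 := by
          intro t; simp [jacobiTheta₂_term]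
        simpa [this] using tendsto_const_nhds
      · simp only [hn, if_false]
        rw [tendsto_zero_iff_norm_tendsto_zero]
        have hev : ∀ t, ‖jacobiTheta₂_term n z (f t)‖
            = Real.exp (-Real.pi * n ^ 2 * (f t).im) := by
          intro t; rw [norm_jacobiTheta₂_term, hz]; norm_num
        simp only [hev]
        have hn2 : (0:ℝ) < (n:ℝ)^2 := by positivity
        have : Tendsto (fun t => -Real.pi * n ^ 2 * (f t).im) (𝓝[>] (0:ℝ)) atBot := by
          apply Tendsto.const_mul_atTop_of_neg _ hf
          nlinarith [Real.pi_pos]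
        exact Real.tendsto_exp_atBot.comp this
    · filter_upwards [hf.eventually_ge_atTop 1] with t ht
      intro n
      rw [norm_jacobiTheta₂_term, hz]
      simp only [mul_zero, sub_zero]
      apply Real.exp_le_exp.mpr
      have hn2 : (0:ℝ) ≤ (n:ℝ)^2 := by positivity
      nlinarith [mul_nonneg (mul_nonneg Real.pi_pos.le hn2) (sub_nonneg.mpr ht)]
  rw [tsum_ite_eq (0:ℤ) (fun _ => (1:ℂ))] at key
  exact key

def GS.modEquiv (M : ℕ) [NeZero M] : (Fin M × ℤ) ≃ ℤ :=
  (Equiv.prodComm (Fin M) ℤ).trans (Int.divModEquiv M).symm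

lemma GS.tsum_int_mod (M : ℕ) [NeZero M] {f : ℤ → ℂ} (hf : Summable f) :
    ∑' n : ℤ, f n = ∑ b ∈ Finset.range M, ∑' m : ℤ, f (m * M + b) := by
  set e := GS.modEquiv M with he0
  have he : (fun q : Fin M × ℤ => f (e q)) = fun q => f (q.2 * M + (q.1:ℤ)) := by
    funext q; congr 1
  rw [← e.tsum_eq f]
  have hs : Summable (fun q : Fin M × ℤ => f (e q)) := e.summable_iff.mpr hf
  rw [he] at hs ⊢
  rw [hs.tsum_prod, tsum_fintype]
  rw [← Fin.sum_univ_eq_sum_range (fun b => ∑' m : ℤ, f (m * M + b))]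

lemma GS.ofReal_mul_cpow {r : ℝ} (hr : 0 < r) {w : ℂ} (hw : w ≠ 0) (c : ℂ) :
    ((r:ℂ) * w) ^ c = (r:ℂ) ^ c * w ^ c := by
  have hr' : (r:ℂ) ≠ 0 := Complex.ofReal_ne_zero.mpr hr.ne'
  rw [Complex.cpow_def_of_ne_zero (mul_ne_zero hr' hw), Complex.log_ofReal_mul hr hw,
    add_mul, Complex.exp_add, Complex.cpow_def_of_ne_zero hr', Complex.cpow_def_of_ne_zero hw,
    Complex.ofReal_log hr.le]

lemma GS.theta_sub (b : ℂ) (M : ℕ) (hM : 0 < M) {τ : ℂ} (hτ : 0 < τ.im) :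
    ∑' m : ℤ, Complex.exp (Real.pi * I * ((m : ℂ) * M + b) ^ 2 * τ)
      = 1 / (-I * ((M:ℂ)^2 * τ)) ^ (1/2 : ℂ) * jacobiTheta₂ (b / M) (-1 / ((M:ℂ)^2 * τ)) := by
  have hM' : (M:ℂ) ≠ 0 := Nat.cast_ne_zero.mpr hM.ne'
  have hτ' : τ ≠ 0 := by intro h; rw [h] at hτ; simp at hτ
  have h1 : ∀ m : ℤ, Complex.exp (Real.pi * I * ((m:ℂ)*M + b)^2 * τ)
      = Complex.exp (Real.pi * I * b^2 * τ) * jacobiTheta₂_term m (b*M*τ) ((M:ℂ)^2*τ) := by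
    intro m
    rw [jacobiTheta₂_term, ← Complex.exp_add]
    congr 1
    ring
  simp_rw [h1]
  rw [tsum_mul_left]
  have h2 : (∑' m : ℤ, jacobiTheta₂_term m (b*M*τ) ((M:ℂ)^2*τ))
      = jacobiTheta₂ (b*M*τ) ((M:ℂ)^2*τ) := rfl
  rw [h2, jacobiTheta₂_functional_equation]
  have h3 : (b*M*τ) / ((M:ℂ)^2*τ) = b/M := by field_simp
  have h4 : Complex.exp (Real.pi*I*b^2*τ)
      * Complex.exp (-Real.pi*I*(b*M*τ)^2/((M:ℂ)^2*τ)) = 1 := by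
    rw [← Complex.exp_add, ← Complex.exp_zero]
    congr 1
    field_simp
    ring
  rw [h3]
  calc Complex.exp (Real.pi*I*b^2*τ) * (1 / (-I * ((M:ℂ)^2*τ)) ^ (1/2:ℂ)
        * Complex.exp (-Real.pi*I*(b*M*τ)^2/((M:ℂ)^2*τ)) * jacobiTheta₂ (b/M) (-1/((M:ℂ)^2*τ)))
      = (Complex.exp (Real.pi*I*b^2*τ) * Complex.exp (-Real.pi*I*(b*M*τ)^2/((M:ℂ)^2*τ)))
        * (1 / (-I * ((M:ℂ)^2*τ)) ^ (1/2:ℂ) * jacobiTheta₂ (b/M) (-1/((M:ℂ)^2*τ))) := by ring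
    _ = _ := by rw [h4, one_mul]

lemma GS.stepA (p : ℕ) (hp : 0 < p) {t : ℝ} (ht : 0 < t) :
    ((Real.sqrt ((p:ℝ)^2*t) : ℝ) : ℂ) * jacobiTheta₂ 0 (((2/p : ℝ):ℂ) + (t:ℝ) * I)
      = ∑ b ∈ Finset.range p, Complex.exp (2 * Real.pi * I * (b:ℂ)^2 / p)
          * jacobiTheta₂ ((b:ℂ) / p) (((1/((p:ℝ)^2*t) : ℝ) : ℂ) * I) := by
  haveI : NeZero p := ⟨hp.ne'⟩
  have hp' : (p:ℂ) ≠ 0 := Nat.cast_ne_zero.mpr hp.ne'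
  have hpR : (0:ℝ) < p := Nat.cast_pos.mpr hp
  set τ₀ : ℂ := ((2/p : ℝ):ℂ) + (t:ℝ) * I with hτ₀
  have hτim : τ₀.im = t := by simp [hτ₀]
  have h0 : jacobiTheta₂ 0 τ₀ = ∑' n : ℤ, Complex.exp (Real.pi * I * (n:ℂ)^2 * τ₀) := by
    refine tsum_congr fun n => ?_
    rw [jacobiTheta₂_term]
    congr 1
    ring
  have hsum : Summable fun n : ℤ => Complex.exp (Real.pi * I * (n:ℂ)^2 * τ₀) := by
    refine ((summable_jacobiTheta₂_term_iff 0 τ₀).mpr (by rw [hτim]; exact ht)).congr fun n => ?_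
    rw [jacobiTheta₂_term]
    congr 1
    ring
  rw [h0, GS.tsum_int_mod p hsum, Finset.mul_sum]
  refine Finset.sum_congr rfl fun b hb => ?_
  have key : ∀ m : ℤ, Complex.exp (Real.pi * I * ((m * p + b : ℤ):ℂ)^2 * τ₀)
      = Complex.exp (2 * Real.pi * I * (b:ℂ)^2 / p)
        * Complex.exp (Real.pi * I * ((m:ℂ) * p + (b:ℂ))^2 * ((t:ℝ)*I)) := by
    intro m
    rw [← Complex.exp_add,
      show (Real.pi * I * ((m * p + b : ℤ):ℂ)^2 * τ₀ : ℂ)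
        = (2 * Real.pi * I * (b:ℂ)^2/p + Real.pi * I * ((m:ℂ)*p+(b:ℂ))^2*((t:ℝ)*I))
          + (m*(m*p+2*b) : ℤ)*(2*Real.pi*I) from ?_,
      Complex.exp_add, Complex.exp_int_mul_two_pi_mul_I, mul_one]
    rw [hτ₀]
    push_cast
    field_simp
    ring
  rw [tsum_congr key, tsum_mul_left, GS.theta_sub (b:ℂ) p hp (τ := (t:ℝ)*I) (by simp [ht])]
  have e1 : -I*((p:ℂ)^2*((t:ℝ)*I)) = (((p:ℝ)^2*t : ℝ):ℂ) := by
    push_cast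
    linear_combination (-((p:ℂ)^2*(t:ℂ))) * Complex.I_sq
  have hden : ((p:ℂ)^2*((t:ℝ)*I)) ≠ 0 := by
    apply mul_ne_zero (pow_ne_zero _ hp')
    exact mul_ne_zero (Complex.ofReal_ne_zero.mpr ht.ne') Complex.I_ne_zero
  have hx : (((p:ℝ)^2*t:ℝ):ℂ) ≠ 0 := by
    rw [Complex.ofReal_ne_zero]; positivity
  have e2 : -1/((p:ℂ)^2*((t:ℝ)*I)) = ((1/((p:ℝ)^2*t) : ℝ):ℂ) * I := by
    rw [show ((p:ℂ)^2*((t:ℝ)*I)) = (((p:ℝ)^2*t : ℝ):ℂ) * I by push_cast; ring,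
      show ((1/((p:ℝ)^2*t) : ℝ):ℂ) = 1/(((p:ℝ)^2*t:ℝ):ℂ) by push_cast; ring,
      div_eq_iff (mul_ne_zero hx Complex.I_ne_zero), one_div,
      show ((((p:ℝ)^2*t:ℝ):ℂ))⁻¹ * I * ((((p:ℝ)^2*t:ℝ):ℂ) * I)
        = (((p:ℝ)^2*t:ℝ):ℂ)⁻¹ * (((p:ℝ)^2*t:ℝ):ℂ) * (I*I) by ring,
      inv_mul_cancel₀ hx, one_mul, Complex.I_mul_I]
  rw [e1, e2]
  have e3 : (((p:ℝ)^2*t : ℝ):ℂ)^(1/2:ℂ) = ((Real.sqrt ((p:ℝ)^2*t) : ℝ):ℂ) := by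
    rw [show (1/2:ℂ) = ((1/2:ℝ):ℂ) by norm_num,
      ← Complex.ofReal_cpow (by positivity), ← Real.sqrt_eq_rpow]
  rw [e3]
  have hs : ((Real.sqrt ((p:ℝ)^2*t):ℝ):ℂ) ≠ 0 := by
    rw [Complex.ofReal_ne_zero]
    positivity
  have hCt : ((Real.sqrt t:ℝ):ℂ) ≠ 0 := by
    rw [Complex.ofReal_ne_zero]; positivity
  field_simp

lemma GS.I_cubed : (I:ℂ)^3 = -I := by
  rw [pow_succ, Complex.I_sq]
  ring

lemma GS.stepC (p : ℕ) (hp : 0 < p) (h4 : p % 4 = 1) {t : ℝ} (ht : 0 < t) :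
    ((Real.sqrt ((p:ℝ)^2*t) : ℝ) : ℂ) * jacobiTheta₂ 0 (((2/p : ℝ):ℂ) + (t:ℝ) * I)
      = ((Real.sqrt ((p:ℝ)/2) : ℝ):ℂ) * ((((2/p : ℝ):ℂ) + (t:ℝ) * I)^(1/2:ℂ))
          / (-I*(((2/p : ℝ):ℂ) + (t:ℝ) * I))^(1/2:ℂ)
        * (jacobiTheta₂ 0 (((-1/(2*(p:ℝ)) : ℝ):ℂ) + ((1/((p:ℝ)^2*t) : ℝ):ℂ) * I)
           + (-I) * jacobiTheta₂ ((1:ℂ)/2) (((-1/(2*(p:ℝ)) : ℝ):ℂ) + ((1/((p:ℝ)^2*t) : ℝ):ℂ) * I)) := by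
  have hp' : (p:ℂ) ≠ 0 := Nat.cast_ne_zero.mpr hp.ne'
  have hpR : (0:ℝ) < p := Nat.cast_pos.mpr hp
  set τ₀ : ℂ := ((2/p : ℝ):ℂ) + (t:ℝ) * I with hτ₀
  set σ' : ℂ := ((-1/(2*(p:ℝ)) : ℝ):ℂ) + ((1/((p:ℝ)^2*t) : ℝ):ℂ) * I with hσ'
  have hτim : τ₀.im = t := by simp [hτ₀]
  have hτre : τ₀.re = 2/p := by simp [hτ₀]
  have hτ0 : τ₀ ≠ 0 := by
    intro h
    rw [h] at hτim
    simp at hτim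
    exact ht.ne' hτim.symm
  have hns : 0 < Complex.normSq τ₀ := Complex.normSq_pos.mpr hτ0
  have him' : (-1/τ₀).im = t / Complex.normSq τ₀ := by
    rw [neg_div, one_div, Complex.neg_im, Complex.inv_im, hτim]
    ring
  have him : (0:ℝ) < (-1/τ₀).im := by
    rw [him']
    positivity
  -- the shifted variable
  set σ : ℂ := -1/τ₀ + (p:ℂ)/2 with hσ
  have hσim : σ.im = (-1/τ₀).im := by
    rw [hσ]
    simp
  have hσim' : (0:ℝ) < σ.im := by rw [hσim]; exact him
  have hσ0 : σ ≠ 0 := by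
    intro h
    rw [h] at hσim'
    simp at hσim'
  have hτ0' : ((2:ℂ)/p + (t:ℂ)*I) ≠ 0 := by
    rw [show ((2:ℂ)/p + (t:ℂ)*I) = τ₀ by rw [hτ₀]; push_cast; ring]
    exact hτ0
  have hpt : ((2:ℂ) + (p:ℂ)*(t:ℂ)*I) ≠ 0 := by
    rw [show ((2:ℂ) + (p:ℂ)*(t:ℂ)*I) = (p:ℂ) * τ₀ by rw [hτ₀]; push_cast; field_simp]
    exact mul_ne_zero hp' hτ0
  have hσval : σ = ((p*t : ℝ):ℂ) * I / (2*τ₀) := by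
    have hpt' : ((2:ℂ) + (t:ℂ)*I*(p:ℂ)) ≠ 0 := by
      rw [show ((2:ℂ) + (t:ℂ)*I*(p:ℂ)) = 2 + (p:ℂ)*(t:ℂ)*I by ring]
      exact hpt
    rw [hσ, hτ₀]
    push_cast
    field_simp [hpt']
    ring
  -- functional equation at z = 0
  have fe : jacobiTheta₂ 0 τ₀ = 1/(-I*τ₀)^(1/2:ℂ) * jacobiTheta₂ 0 (-1/τ₀) := by
    rw [jacobiTheta₂_functional_equation 0 τ₀]
    norm_num
  -- expand θ(0, -1/τ₀) as a sum and split mod 2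
  have h0 : jacobiTheta₂ 0 (-1/τ₀) = ∑' n : ℤ, Complex.exp (Real.pi * I * (n:ℂ)^2 * (-1/τ₀)) := by
    refine tsum_congr fun n => ?_
    rw [jacobiTheta₂_term]
    congr 1
    ring
  have hsum2 : Summable fun n : ℤ => Complex.exp (Real.pi * I * (n:ℂ)^2 * (-1/τ₀)) := by
    refine ((summable_jacobiTheta₂_term_iff 0 (-1/τ₀)).mpr him).congr fun n => ?_
    rw [jacobiTheta₂_term]
    congr 1
    ring
  have key0 : ∀ m : ℤ, Complex.exp (Real.pi * I * ((m * (2:ℕ) + (0:ℕ) : ℤ):ℂ)^2 * (-1/τ₀))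
      = Complex.exp (Real.pi * I * ((m:ℂ) * (2:ℕ) + ((0:ℕ):ℂ))^2 * σ) := by
    intro m
    rw [show (Real.pi * I * ((m * (2:ℕ) + (0:ℕ) : ℤ):ℂ)^2 * (-1/τ₀) : ℂ)
        = Real.pi * I * ((m:ℂ) * (2:ℕ) + ((0:ℕ):ℂ))^2 * σ + (-(p:ℤ)*m^2 : ℤ)*(2*Real.pi*I) from ?_,
      Complex.exp_add, Complex.exp_int_mul_two_pi_mul_I, mul_one]
    rw [hσ]
    push_cast
    ring
  have key1 : ∀ m : ℤ, Complex.exp (Real.pi * I * ((m * (2:ℕ) + (1:ℕ) : ℤ):ℂ)^2 * (-1/τ₀))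
      = (-I) * Complex.exp (Real.pi * I * ((m:ℂ) * (2:ℕ) + ((1:ℕ):ℂ))^2 * σ) := by
    intro m
    obtain ⟨k, hk⟩ : ∃ k, p = 4*k+1 := ⟨p/4, by omega⟩
    have hmI : (-I : ℂ) = Complex.exp (Real.pi * I * (-1/2 : ℂ)) := by
      rw [show (Real.pi * I * (-1/2:ℂ) : ℂ) = ((-(Real.pi/2) : ℝ):ℂ) * I by push_cast; ring,
        Complex.exp_mul_I, ← Complex.ofReal_cos, ← Complex.ofReal_sin,
        Real.cos_neg, Real.sin_neg, Real.cos_pi_div_two, Real.sin_pi_div_two]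
      push_cast
      ring
    rw [hmI, ← Complex.exp_add,
      show (Real.pi * I * ((m * (2:ℕ) + (1:ℕ) : ℤ):ℂ)^2 * (-1/τ₀) : ℂ)
        = (Real.pi * I * (-1/2:ℂ) + Real.pi * I * ((m:ℂ) * (2:ℕ) + ((1:ℕ):ℂ))^2 * σ)
          + (-((p:ℤ)*(m^2+m)) - k : ℤ)*(2*Real.pi*I) from ?_,
      Complex.exp_add, Complex.exp_int_mul_two_pi_mul_I, mul_one]
    rw [hσ, hk]
    push_cast
    ring
  rw [fe, h0, GS.tsum_int_mod 2 hsum2, Finset.sum_range_succ, Finset.sum_range_one,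
    tsum_congr key0, tsum_congr key1, tsum_mul_left,
    GS.theta_sub ((0:ℕ):ℂ) 2 (by norm_num) hσim',
    GS.theta_sub ((1:ℕ):ℂ) 2 (by norm_num) hσim']
  -- simplify the arguments
  have hd : ((2:ℂ) + (t:ℂ)*I*(p:ℂ)) ≠ 0 := by
    rw [show ((2:ℂ) + (t:ℂ)*I*(p:ℂ)) = 2 + (p:ℂ)*(t:ℂ)*I by ring]
    exact hpt
  have harg : -1/(((2:ℕ):ℂ)^2*σ) = σ' := by
    have h2 : (((2:ℕ):ℂ)^2*σ) ≠ 0 := mul_ne_zero (by norm_num) hσ0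
    rw [div_eq_iff h2, hσval, hσ', hτ₀]
    push_cast
    field_simp [hd, hp', Complex.ofReal_ne_zero.mpr ht.ne']
    ring_nf
    rw [Complex.I_sq]
    ring
  have hval : -I*(((2:ℕ):ℂ)^2*σ) = ((2*(p:ℝ)*t : ℝ):ℂ) / τ₀ := by
    rw [hσval, eq_div_iff hτ0]
    push_cast
    field_simp [hτ0]
    ring_nf
    simp only [Complex.I_sq, GS.I_cubed]
    ring
  have hargpi : τ₀.arg ≠ Real.pi := by
    intro h
    rw [Complex.arg_eq_pi_iff] at h
    rw [hτim] at h
    exact ht.ne' h.2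
  have hcp : (-I*(((2:ℕ):ℂ)^2*σ))^(1/2:ℂ)
      = ((Real.sqrt (2*(p:ℝ)*t) : ℝ):ℂ) * (τ₀^(1/2:ℂ))⁻¹ := by
    rw [hval, div_eq_mul_inv, GS.ofReal_mul_cpow (by positivity) (inv_ne_zero hτ0),
      Complex.inv_cpow _ _ hargpi,
      show (1/2:ℂ) = ((1/2:ℝ):ℂ) by norm_num,
      ← Complex.ofReal_cpow (by positivity), ← Real.sqrt_eq_rpow]
  have hcp0 : τ₀^(1/2:ℂ) ≠ 0 := by
    intro h
    rw [Complex.cpow_eq_zero_iff] at h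
    exact hτ0 h.1
  have hsq0 : ((Real.sqrt (2*(p:ℝ)*t) : ℝ):ℂ) ≠ 0 := by
    rw [Complex.ofReal_ne_zero]
    positivity
  have hr : Real.sqrt ((p:ℝ)^2*t) = Real.sqrt ((p:ℝ)/2) * Real.sqrt (2*(p:ℝ)*t) := by
    rw [← Real.sqrt_mul (by positivity)]
    congr 1
    ring
  have hpre : ((Real.sqrt ((p:ℝ)^2*t) : ℝ):ℂ) * (1/(-I*(((2:ℕ):ℂ)^2*σ))^(1/2:ℂ))
      = ((Real.sqrt ((p:ℝ)/2) : ℝ):ℂ) * τ₀^(1/2:ℂ) := by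
    rw [hcp, hr]
    push_cast
    have h1 : ((Real.sqrt 2:ℝ):ℂ) ≠ 0 := by rw [Complex.ofReal_ne_zero]; positivity
    have h2 : ((Real.sqrt (p:ℝ):ℝ):ℂ) ≠ 0 := by rw [Complex.ofReal_ne_zero]; positivity
    have h3 : ((Real.sqrt t:ℝ):ℂ) ≠ 0 := by rw [Complex.ofReal_ne_zero]; positivity
    field_simp [h1, h2, h3]
  rw [harg, show (((0:ℕ):ℂ)/((2:ℕ):ℂ)) = 0 by norm_num,
    show (((1:ℕ):ℂ)/((2:ℕ):ℂ)) = (1:ℂ)/2 by norm_num]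
  linear_combination ((jacobiTheta₂ 0 σ' + (-I)*jacobiTheta₂ ((1:ℂ)/2) σ')
    / (-I*τ₀)^(1/2:ℂ)) * hpre

lemma GS.ofReal_mul_I_im (r : ℝ) : (((r:ℝ):ℂ) * I).im = r := by simp

lemma GS.im_aux (a r : ℝ) : (((a:ℝ):ℂ) + ((r:ℝ):ℂ)*I).im = r := by simp

open Filter Topology in
lemma GS.aux_lim (p : ℕ) (hp0 : 0 < p) :
    Tendsto (fun t : ℝ => 1/((p:ℝ)^2*t)) (𝓝[>] (0:ℝ)) atTop := by
  have hpR : (0:ℝ) < p := Nat.cast_pos.mpr hp0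
  have h1 : Tendsto (fun t:ℝ => (p:ℝ)^2*t) (𝓝[>] (0:ℝ)) (𝓝[>] (0:ℝ)) := by
    rw [tendsto_nhdsWithin_iff]
    constructor
    · have h2 : Tendsto (fun t:ℝ => (p:ℝ)^2*t) (𝓝 (0:ℝ)) (𝓝 ((p:ℝ)^2*0)) :=
        (continuous_const.mul continuous_id).tendsto 0
      rw [mul_zero] at h2
      exact h2.mono_left nhdsWithin_le_nhds
    · filter_upwards [self_mem_nhdsWithin] with t ht
      exact mul_pos (by positivity : (0:ℝ) < (p:ℝ)^2) ht
  have := tendsto_inv_nhdsGT_zero.comp h1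
  refine this.congr fun t => ?_
  simp [one_div]

open Filter Topology in
theorem gauss_sum_one_mod_four (p : ℕ) (hp : p.Prime) (hp2 : p ≠ 2) (h4 : p % 4 = 1) :
    ∑ b ∈ Finset.range p, Complex.exp (2 * Real.pi * I * (b : ℂ) ^ 2 / p)
      = (Real.sqrt p : ℂ) := by
  have hp0 : 0 < p := hp.pos
  have hpR : (0:ℝ) < p := Nat.cast_pos.mpr hp0
  set F : ℝ → ℂ := fun t =>
    ((Real.sqrt ((p:ℝ)^2*t) : ℝ):ℂ) * jacobiTheta₂ 0 (((2/p : ℝ):ℂ) + (t:ℝ)*I) with hF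
  -- limit 1 : F tends to the Gauss sum
  have lim1 : Tendsto F (𝓝[>] (0:ℝ))
      (𝓝 (∑ b ∈ Finset.range p, Complex.exp (2 * Real.pi * I * (b : ℂ) ^ 2 / p))) := by
    have hev : (fun t => ∑ b ∈ Finset.range p, Complex.exp (2 * Real.pi * I * (b:ℂ)^2 / p)
        * jacobiTheta₂ ((b:ℂ) / p) (((1/((p:ℝ)^2*t) : ℝ) : ℂ) * I)) =ᶠ[𝓝[>] (0:ℝ)] F := by
      filter_upwards [self_mem_nhdsWithin] with t ht
      exact (GS.stepA p hp0 ht).symm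
    refine Tendsto.congr' hev ?_
    have : (∑ b ∈ Finset.range p, Complex.exp (2 * Real.pi * I * (b : ℂ) ^ 2 / p))
        = ∑ b ∈ Finset.range p, Complex.exp (2 * Real.pi * I * (b : ℂ) ^ 2 / p) * 1 := by
      simp
    rw [this]
    refine tendsto_finset_sum _ fun b _ => ?_
    refine Tendsto.const_mul _ ?_
    refine GS.tendsto_theta_one ?_ ?_
    · rw [show ((b:ℂ)/p) = (((b:ℝ)/p : ℝ):ℂ) by push_cast; ring]
      exact Complex.ofReal_im _
    · exact (GS.aux_lim p hp0).congr fun t => (GS.ofReal_mul_I_im _).symm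
  -- limit 2 : F tends to the closed-form value
  have lim2 : Tendsto F (𝓝[>] (0:ℝ))
      (𝓝 (((Real.sqrt ((p:ℝ)/2) : ℝ):ℂ) * (((2/p : ℝ):ℂ))^(1/2:ℂ)
          / (-I*(((2/p : ℝ):ℂ)))^(1/2:ℂ) * (1 + (-I) * 1))) := by
    have hev : (fun t => ((Real.sqrt ((p:ℝ)/2) : ℝ):ℂ) * ((((2/p : ℝ):ℂ) + (t:ℝ) * I)^(1/2:ℂ))
          / (-I*(((2/p : ℝ):ℂ) + (t:ℝ) * I))^(1/2:ℂ)
        * (jacobiTheta₂ 0 (((-1/(2*(p:ℝ)) : ℝ):ℂ) + ((1/((p:ℝ)^2*t) : ℝ):ℂ) * I)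
           + (-I) * jacobiTheta₂ ((1:ℂ)/2) (((-1/(2*(p:ℝ)) : ℝ):ℂ) + ((1/((p:ℝ)^2*t) : ℝ):ℂ) * I)))
        =ᶠ[𝓝[>] (0:ℝ)] F := by
      filter_upwards [self_mem_nhdsWithin] with t ht
      exact (GS.stepC p hp0 h4 ht).symm
    refine Tendsto.congr' hev ?_
    have htau : Tendsto (fun t:ℝ => ((2/p : ℝ):ℂ) + (t:ℝ) * I) (𝓝[>] (0:ℝ))
        (𝓝 (((2/p : ℝ):ℂ))) := by
      have h2 : Tendsto (fun t:ℝ => ((2/p : ℝ):ℂ) + (t:ℝ) * I) (𝓝 (0:ℝ))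
          (𝓝 (((2/p : ℝ):ℂ) + ((0:ℝ):ℂ) * I)) := by
        exact (continuous_const.add ((Complex.continuous_ofReal).mul continuous_const)).tendsto 0
      simp only [Complex.ofReal_zero, zero_mul, add_zero] at h2
      exact h2.mono_left nhdsWithin_le_nhds
    have hnum : Tendsto (fun t:ℝ => (((2/p : ℝ):ℂ) + (t:ℝ) * I)^(1/2:ℂ)) (𝓝[>] (0:ℝ))
        (𝓝 ((((2/p : ℝ):ℂ))^(1/2:ℂ))) := by
      refine (continuousAt_cpow_const ?_).tendsto.comp htau
      rw [Complex.mem_slitPlane_iff]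
      left
      rw [Complex.ofReal_re]
      positivity
    have hden : Tendsto (fun t:ℝ => (-I*(((2/p : ℝ):ℂ) + (t:ℝ) * I))^(1/2:ℂ)) (𝓝[>] (0:ℝ))
        (𝓝 ((-I*(((2/p : ℝ):ℂ)))^(1/2:ℂ))) := by
      refine (continuousAt_cpow_const ?_).tendsto.comp ((continuous_const.mul continuous_id).continuousAt.tendsto.comp htau)
      rw [Complex.mem_slitPlane_iff]
      right
      rw [show ((-I*(((2/p : ℝ):ℂ))).im) = -(2/(p:ℝ)) by simp]
      exact neg_ne_zero.mpr (by positivity)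
    have hden0 : (-I*(((2/p : ℝ):ℂ)))^(1/2:ℂ) ≠ 0 := by
      intro h
      rw [Complex.cpow_eq_zero_iff] at h
      exact (mul_ne_zero (neg_ne_zero.mpr Complex.I_ne_zero)
        (Complex.ofReal_ne_zero.mpr (by positivity))) h.1
    have hth0 : Tendsto (fun t:ℝ => jacobiTheta₂ 0
        (((-1/(2*(p:ℝ)) : ℝ):ℂ) + ((1/((p:ℝ)^2*t) : ℝ):ℂ) * I)) (𝓝[>] (0:ℝ)) (𝓝 1) := by
      refine GS.tendsto_theta_one (by simp) ?_
      exact (GS.aux_lim p hp0).congr fun t => (GS.im_aux _ _).symm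
    have hth1 : Tendsto (fun t:ℝ => jacobiTheta₂ ((1:ℂ)/2)
        (((-1/(2*(p:ℝ)) : ℝ):ℂ) + ((1/((p:ℝ)^2*t) : ℝ):ℂ) * I)) (𝓝[>] (0:ℝ)) (𝓝 1) := by
      refine GS.tendsto_theta_one ?_ ?_
      · rw [show ((1:ℂ)/2) = (((1/2 : ℝ)):ℂ) by norm_num]
        exact Complex.ofReal_im _
      · exact (GS.aux_lim p hp0).congr fun t => (GS.im_aux _ _).symm
    exact ((((tendsto_const_nhds.mul hnum).div hden hden0)).mul
      (hth0.add (tendsto_const_nhds.mul hth1)))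
  have huniq := tendsto_nhds_unique lim1 lim2
  rw [huniq]
  -- now evaluate the closed form
  have e1 : (((2/p : ℝ):ℂ))^(1/2:ℂ) = ((Real.sqrt (2/(p:ℝ)) : ℝ):ℂ) := by
    rw [show (1/2:ℂ) = ((1/2:ℝ):ℂ) by norm_num, ← Complex.ofReal_cpow (by positivity),
      ← Real.sqrt_eq_rpow]
  have e2 : (-I*(((2/p : ℝ):ℂ)))^(1/2:ℂ)
      = ((Real.sqrt (2/(p:ℝ)) : ℝ):ℂ) * ((Real.sqrt 2/2 : ℝ):ℂ) * (1 - I) := by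
    rw [show (-I*(((2/p : ℝ):ℂ))) = ((2/(p:ℝ) : ℝ):ℂ) * (-I) by ring,
      GS.ofReal_mul_cpow (by positivity) (neg_ne_zero.mpr Complex.I_ne_zero), e1]
    have e3 : (-I:ℂ)^(1/2:ℂ) = ((Real.sqrt 2/2 : ℝ):ℂ) * (1 - I) := by
      rw [Complex.cpow_def_of_ne_zero (neg_ne_zero.mpr Complex.I_ne_zero), Complex.log_neg_I,
        show ((-(Real.pi/2) * I) * (1/2 : ℂ) : ℂ) = ((-(Real.pi/4) : ℝ):ℂ) * I by push_cast; ring,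
        Complex.exp_mul_I, ← Complex.ofReal_cos, ← Complex.ofReal_sin,
        Real.cos_neg, Real.sin_neg, Real.cos_pi_div_four, Real.sin_pi_div_four]
      push_cast
      ring
    rw [e3]
    ring
  rw [e1, e2]
  have h20 : ((Real.sqrt (2/(p:ℝ)) : ℝ):ℂ) ≠ 0 := by
    rw [Complex.ofReal_ne_zero]
    positivity
  have h21 : ((Real.sqrt 2/2 : ℝ):ℂ) ≠ 0 := by
    rw [Complex.ofReal_ne_zero]
    positivity
  have h22 : ((1:ℂ) - I) ≠ 0 := by
    intro h
    have := congrArg Complex.im h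
    simp at this
  rw [show ((1:ℂ) + (-I) * 1) = 1 - I by ring]
  rw [div_mul_eq_mul_div, div_eq_iff (by exact mul_ne_zero (mul_ne_zero h20 h21) h22)]
  -- reduce to a real identity
  have hr1 : Real.sqrt ((p:ℝ)/2) * Real.sqrt (2/(p:ℝ)) = 1 := by
    rw [← Real.sqrt_mul (by positivity), show ((p:ℝ)/2) * (2/(p:ℝ)) = 1 by field_simp]
    exact Real.sqrt_one
  have hr2 : Real.sqrt (p:ℝ) * (Real.sqrt (2/(p:ℝ)) * (Real.sqrt 2/2)) = 1 := by
    rw [show Real.sqrt (p:ℝ) * (Real.sqrt (2/(p:ℝ)) * (Real.sqrt 2/2))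
        = Real.sqrt (p:ℝ) * Real.sqrt (2/(p:ℝ)) * Real.sqrt 2 / 2 by ring,
      ← Real.sqrt_mul (by positivity), ← Real.sqrt_mul (by positivity),
      show (p:ℝ) * (2/(p:ℝ)) * 2 = 4 by field_simp; norm_num,
      show (4:ℝ) = 2^2 by norm_num, Real.sqrt_sq (by norm_num)]
    norm_num
  have hL : ((Real.sqrt ((p:ℝ)/2) : ℝ):ℂ) * ((Real.sqrt (2/(p:ℝ)) : ℝ):ℂ) * (1-I) = 1-I := by
    rw [show ((Real.sqrt ((p:ℝ)/2) : ℝ):ℂ) * ((Real.sqrt (2/(p:ℝ)) : ℝ):ℂ) * (1-I)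
        = ((Real.sqrt ((p:ℝ)/2) * Real.sqrt (2/(p:ℝ)) : ℝ):ℂ) * (1-I) by push_cast; ring,
      hr1, Complex.ofReal_one, one_mul]
  have hR : ((Real.sqrt (p:ℝ) : ℝ):ℂ) * (((Real.sqrt (2/(p:ℝ)) : ℝ):ℂ) * ((Real.sqrt 2/2 : ℝ):ℂ) * (1-I)) = 1-I := by
    rw [show ((Real.sqrt (p:ℝ) : ℝ):ℂ) * (((Real.sqrt (2/(p:ℝ)) : ℝ):ℂ) * ((Real.sqrt 2/2 : ℝ):ℂ) * (1-I))
        = ((Real.sqrt (p:ℝ) * (Real.sqrt (2/(p:ℝ)) * (Real.sqrt 2/2)) : ℝ):ℂ) * (1-I) by push_cast; ring,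
      hr2, Complex.ofReal_one, one_mul]
  rw [hL, hR]
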